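/- Let γ : ℝ^n → ℝ be γ(x) = h⊤x − 1, let ê₁, …, ê_{N_s} ∈ ℝ^n be samples, α ∈ (0,1), ε ≥ 0, and let 1/p + 1/q = 1. Suppose there exist τ ∈ ℝ, λ ≥ 0, and s₁, …, s_{N_s} ≥ 0 such that −ατ + ελ + (1/N_s) Σ_j s_j ≤ 0, (γ(z + ê_j) + τ)_+ ≤ s_j for all j, and ‖h‖_p ≤ λ. Then inf_{τ' ∈ ℝ} [ −ατ' + λε + (1/N_s) Σ_j sup_{e ∈ ℝ^n} ( (γ(z+e) + τ')_+ − λ‖e − ê_j‖_q ) ] ≤ 0. -/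

import Mathlib

/-- The `q`-norm on `ℝ^n`. -/
noncomputable def qnorm {n : ℕ} (q : ℝ) (x : Fin n → ℝ) : ℝ :=
  (∑ i, |x i| ^ q) ^ (1 / q)

lemma qnorm_nonneg {n : ℕ} (q : ℝ) (x : Fin n → ℝ) : 0 ≤ qnorm q x :=
  Real.rpow_nonneg (Finset.sum_nonneg fun i _ => Real.rpow_nonneg (abs_nonneg _) _) _

lemma qnorm_zero {n : ℕ} {q : ℝ} (hq : 1 ≤ q) : qnorm q (fun _ : Fin n => (0:ℝ)) = 0 := by
  have hq0 : q ≠ 0 := by linarith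
  simp [qnorm, Real.zero_rpow hq0, Real.zero_rpow (inv_ne_zero hq0)]

lemma holder {n : ℕ} {p q : ℝ} (hpq : Real.HolderConjugate p q) (f g : Fin n → ℝ) :
    ∑ i, f i * g i ≤ qnorm p f * qnorm q g := by
  simpa [qnorm] using Real.inner_le_Lp_mul_Lq Finset.univ f g hpq

/-- Feasibility direction of the tractable DR-CVaR reformulation: existence of
certificates `(τ, λ, s)` for the epigraph constraints implies that the dualized
worst-case CVaR constraint holds. -/
theorem certificates_imply_dual_cvar_constraint {n : ℕ} (Ns : ℕ) (hNs : 0 < Ns)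
    (p q : ℝ) (hp : 1 ≤ p) (hq : 1 ≤ q) (hpq : 1 / p + 1 / q = 1)
    (h z : Fin n → ℝ) (ehat : Fin Ns → Fin n → ℝ)
    (α : ℝ) (hα : α ∈ Set.Ioo (0 : ℝ) 1) (ε : ℝ) (hε : 0 ≤ ε)
    (τ lam : ℝ) (hlam : 0 ≤ lam) (s : Fin Ns → ℝ) (hs : ∀ j, 0 ≤ s j)
    (h1 : -α * τ + ε * lam + (1 / (Ns : ℝ)) * ∑ j, s j ≤ 0)
    (h2 : ∀ j, max ((∑ i, h i * (z i + ehat j i)) - 1 + τ) 0 ≤ s j)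
    (h3 : qnorm p h ≤ lam) :
    (⨅ τ' : ℝ, (-α * τ' + lam * ε + (1 / (Ns : ℝ)) * ∑ j,
        ⨆ e : Fin n → ℝ,
          (max ((∑ i, h i * (z i + e i)) - 1 + τ') 0
            - lam * qnorm q (fun i => e i - ehat j i)))) ≤ 0 := by
  obtain ⟨hα0, hα1⟩ := hα
  have hp1 : 1 < p := by
    rcases lt_or_eq_of_le hp with h' | h'
    · exact h'
    · exfalso
      rw [← h'] at hpq
      have hq0 : 0 < 1 / q := by positivity
      norm_num at hpq
      linarith
  have hconj : Real.HolderConjugate p q := Real.holderConjugate_iff.2 ⟨hp1, by simpa [one_div] using hpq⟩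
  set γ : Fin Ns → ℝ := fun j => (∑ i, h i * (z i + ehat j i)) - 1 with hγ
  -- compute the inner supremum
  have hsup : ∀ (τ' : ℝ) (j : Fin Ns),
      (⨆ e : Fin n → ℝ, (max ((∑ i, h i * (z i + e i)) - 1 + τ') 0
          - lam * qnorm q (fun i => e i - ehat j i))) = max (γ j + τ') 0 := by
    intro τ' j
    have hub : ∀ e : Fin n → ℝ,
        max ((∑ i, h i * (z i + e i)) - 1 + τ') 0
          - lam * qnorm q (fun i => e i - ehat j i) ≤ max (γ j + τ') 0 := by
      intro e
      set d : Fin n → ℝ := fun i => e i - ehat j i with hd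
      have hinner : ∑ i, h i * d i ≤ lam * qnorm q d :=
        (holder hconj h d).trans (mul_le_mul_of_nonneg_right h3 (qnorm_nonneg _ _))
      have hdec : (∑ i, h i * (z i + e i)) - 1 = γ j + ∑ i, h i * d i := by
        have hss : (∑ i, h i * (z i + e i))
            = ∑ i, (h i * (z i + ehat j i) + h i * d i) := by
          apply Finset.sum_congr rfl
          intro i _
          simp only [hd]; ring
        rw [hss, Finset.sum_add_distrib]
        simp only [hγ]; ring
      have hq0 : 0 ≤ lam * qnorm q d := mul_nonneg hlam (qnorm_nonneg _ _)
      have hmax : max ((∑ i, h i * (z i + e i)) - 1 + τ') 0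
          ≤ max (γ j + τ') 0 + lam * qnorm q d := by
        apply max_le
        · have : (∑ i, h i * (z i + e i)) - 1 + τ' ≤ (γ j + τ') + lam * qnorm q d := by
            rw [hdec]; linarith
          exact this.trans (by gcongr; exact le_max_left _ _)
        · positivity
      linarith
    apply le_antisymm
    · exact ciSup_le hub
    · have hle := le_ciSup (f := fun e : Fin n → ℝ =>
        max ((∑ i, h i * (z i + e i)) - 1 + τ') 0
          - lam * qnorm q (fun i => e i - ehat j i))
        ⟨max (γ j + τ') 0, Set.forall_mem_range.2 hub⟩ (ehat j)
      have hz : (fun i => ehat j i - ehat j i) = fun _ : Fin n => (0:ℝ) := by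
        funext i; ring
      rw [hz, qnorm_zero (n := n) hq] at hle
      simpa [hγ] using hle
  -- rewrite the infimand
  have hNsR : (0:ℝ) < (Ns:ℝ) := by exact_mod_cast hNs
  set f : ℝ → ℝ := fun τ' => -α * τ' + lam * ε + (1 / (Ns : ℝ)) * ∑ j, max (γ j + τ') 0 with hf
  have hfeq : ∀ τ', (-α * τ' + lam * ε + (1 / (Ns : ℝ)) * ∑ j,
        ⨆ e : Fin n → ℝ,
          (max ((∑ i, h i * (z i + e i)) - 1 + τ') 0
            - lam * qnorm q (fun i => e i - ehat j i))) = f τ' := by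
    intro τ'
    simp only [hf]
    congr 1
    congr 1
    exact Finset.sum_congr rfl fun j _ => hsup τ' j
  simp only [hfeq]
  -- f is bounded below
  have hbdd : BddBelow (Set.range f) := by
    refine ⟨min 0 ((1 / (Ns : ℝ)) * ∑ j, γ j + lam * ε), ?_⟩
    rintro x ⟨τ', rfl⟩
    simp only [hf]
    rcases le_or_gt τ' 0 with hτ | hτ
    · have hsum : 0 ≤ ∑ j, max (γ j + τ') 0 :=
        Finset.sum_nonneg fun j _ => le_max_right _ _
      have : (0:ℝ) ≤ -α * τ' + lam * ε + (1 / (Ns : ℝ)) * ∑ j, max (γ j + τ') 0 := by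
        have h1' : 0 ≤ -α * τ' := by nlinarith
        have h2' : 0 ≤ lam * ε := mul_nonneg hlam hε
        have h3' : 0 ≤ (1 / (Ns : ℝ)) * ∑ j, max (γ j + τ') 0 := by positivity
        linarith
      exact le_trans (min_le_left _ _) this
    · have hsum : ∑ j, (γ j + τ') ≤ ∑ j, max (γ j + τ') 0 :=
        Finset.sum_le_sum fun j _ => le_max_left _ _
      have hsum2 : (1 / (Ns : ℝ)) * ∑ j, (γ j + τ')
          ≤ (1 / (Ns : ℝ)) * ∑ j, max (γ j + τ') 0 := by
        apply mul_le_mul_of_nonneg_left hsum (by positivity)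
      rw [Finset.sum_add_distrib, Finset.sum_const, Finset.card_univ, Fintype.card_fin,
        nsmul_eq_mul] at hsum2
      have hτ'' : (1 / (Ns : ℝ)) * ((Ns:ℝ) * τ') = τ' := by field_simp
      have key : (1 / (Ns : ℝ)) * ∑ j, γ j + τ'
          ≤ (1 / (Ns : ℝ)) * ∑ j, max (γ j + τ') 0 := by
        calc (1 / (Ns : ℝ)) * ∑ j, γ j + τ'
            = (1 / (Ns : ℝ)) * (∑ j, γ j + (Ns:ℝ) * τ') := by
              rw [mul_add, hτ'']
          _ ≤ _ := hsum2
      have : (1 / (Ns : ℝ)) * ∑ j, γ j + lam * ε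
          ≤ -α * τ' + lam * ε + (1 / (Ns : ℝ)) * ∑ j, max (γ j + τ') 0 := by
        nlinarith
      exact le_trans (min_le_right _ _) this
  refine le_trans (ciInf_le hbdd τ) ?_
  -- f τ ≤ 0 using the certificates
  simp only [hf]
  have hsumle : ∑ j, max (γ j + τ) 0 ≤ ∑ j, s j := by
    apply Finset.sum_le_sum
    intro j _
    have := h2 j
    simpa [hγ] using this
  have : (1 / (Ns : ℝ)) * ∑ j, max (γ j + τ) 0 ≤ (1 / (Ns : ℝ)) * ∑ j, s j :=
    mul_le_mul_of_nonneg_left hsumle (by positivity)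
  nlinarith
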